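/- Given W ≥ 0 and ε > 0, suppose Ψ : Λ → Λ satisfies: (3) dist²(γ, Ψ(γ)) ≤ φ((Length²(γ) − Length²(Ψ(γ)))/Length²(Ψ(γ))) for a continuous φ with φ(0) = 0, and (4) for every ε' > 0 there is δ' > 0 so that dist(γ, G) ≥ ε' implies Length(Ψ(γ)) ≤ Length(γ) − δ'. Then there exists δ > 0 so that if γ ∈ Λ and 2π(W − δ) < Length²(Ψ(γ)) ≤ Length²(γ) < 2π(W + δ), then dist(Ψ(γ), G) < ε. -/
import Mathlib


open Real

/-- Key lemma combining properties (3) and (4) of the curve-shortening map `Ψ`: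
given `W ≥ 0` and `ε > 0`, there exists `δ > 0` so that any `γ ∈ Λ` with
`2π(W − δ) < Length²(Ψγ) ≤ Length²(γ) < 2π(W + δ)` satisfies `dist(Ψγ, G) < ε`.
Here `Λ` is the space of curves with the `W^{1,2}` distance, `G ⊂ Λ` the closed
geodesics, and `Length` the length functional. -/
theorem almost_no_drop_implies_close_to_geodesics
    {Λ : Type*} [MetricSpace Λ] (G : Set Λ) (hG : G.Nonempty)
    (Length : Λ → ℝ) (hLen : ∀ γ, 0 ≤ Length γ)
    (Ψ : Λ → Λ)
    -- `Ψ` does not increase length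
    (hmono : ∀ γ, Length (Ψ γ) ≤ Length γ)
    -- property (3): distance moved by `Ψ` is controlled by the relative length drop
    (φ : ℝ → ℝ) (hφcont : Continuous φ) (hφ0 : φ 0 = 0)
    (h3 : ∀ γ, dist γ (Ψ γ) ^ 2
      ≤ φ ((Length γ ^ 2 - Length (Ψ γ) ^ 2) / Length (Ψ γ) ^ 2))
    -- property (4): curves far from `G` have a definite length decrease
    (h4 : ∀ ε' > (0 : ℝ), ∃ δ' > (0 : ℝ), ∀ γ,
      Metric.infDist γ G ≥ ε' → Length (Ψ γ) ≤ Length γ - δ')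
    (W : ℝ) (hW : 0 ≤ W) (ε : ℝ) (hε : 0 < ε) :
    ∃ δ > (0 : ℝ), ∀ γ : Λ,
      2 * π * (W - δ) < Length (Ψ γ) ^ 2 →
      Length (Ψ γ) ^ 2 ≤ Length γ ^ 2 →
      Length γ ^ 2 < 2 * π * (W + δ) →
      Metric.infDist (Ψ γ) G < ε := by
  have hπ : (0:ℝ) < π := Real.pi_pos
  rcases h4 ε hε with ⟨δ₂, hδ₂, hε4⟩
  rcases h4 (ε/2) (half_pos hε) with ⟨δ₁, hδ₁, hh4⟩
  rcases eq_or_lt_of_le hW with hW0 | hWpos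
  · -- W = 0 case
    refine ⟨δ₂^2/(4*π), by positivity, ?_⟩
    intro γ h1 h2 h3'
    by_contra hcon
    push_neg at hcon
    have hdec := hε4 (Ψ γ) hcon
    have hl : δ₂ ≤ Length (Ψ γ) := by
      have := hLen (Ψ (Ψ γ)); linarith
    have hsq : δ₂^2 ≤ Length (Ψ γ)^2 := by nlinarith
    rw [← hW0] at h3'
    have heq : 2*π*(0 + δ₂^2/(4*π)) = δ₂^2/2 := by field_simp; ring
    rw [heq] at h3'
    nlinarith
  · -- W > 0 case
    obtain ⟨η, hη, hφ⟩ :=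
      Metric.continuousAt_iff.mp (hφcont.continuousAt (x := 0)) ((ε/2)^2) (by positivity)
    refine ⟨min (min (W/2) (δ₁^2/(4*π))) (η*W/4), by positivity, ?_⟩
    intro γ hA hB hC
    set δ := min (min (W/2) (δ₁^2/(4*π))) (η*W/4) with hδdef
    have hδW : δ ≤ W/2 := le_trans (min_le_left _ _) (min_le_left _ _)
    have hδ1 : δ ≤ δ₁^2/(4*π) := le_trans (min_le_left _ _) (min_le_right _ _)
    have hδη : δ ≤ η*W/4 := min_le_right _ _
    have hLΨ : π*W < Length (Ψ γ)^2 := by nlinarith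
    have hdiff : Length γ^2 - Length (Ψ γ)^2 < 4*π*δ := by nlinarith
    -- `γ` is close to `G`
    have hγG : Metric.infDist γ G < ε/2 := by
      by_contra hcon
      push_neg at hcon
      have h4' := hh4 γ hcon
      have hd1 : δ₁^2 ≤ Length γ^2 - Length (Ψ γ)^2 := by
        nlinarith [hLen (Ψ γ), hLen γ]
      have hd2 : 4*π*δ ≤ δ₁^2 := by
        rw [le_div_iff₀ (by positivity)] at hδ1; linarith
      linarith
    -- `γ` is close to `Ψ γ`
    set r := (Length γ^2 - Length (Ψ γ)^2) / Length (Ψ γ)^2 with hrdef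
    have hr0 : 0 ≤ r := div_nonneg (by linarith) (sq_nonneg _)
    have hrη : r < η := by
      rw [hrdef, div_lt_iff₀ (by nlinarith)]
      nlinarith [mul_pos hη (sub_pos.mpr hLΨ),
        mul_le_mul_of_nonneg_left hδη (by positivity : (0:ℝ) ≤ 4*π)]
    have hφr : φ r < (ε/2)^2 := by
      have := hφ (x := r) (by simpa [Real.dist_eq, abs_of_nonneg hr0] using hrη)
      rw [Real.dist_eq, hφ0, sub_zero] at this
      calc φ r ≤ |φ r| := le_abs_self _
        _ < (ε/2)^2 := this
    have hdist : dist γ (Ψ γ) < ε/2 := by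
      have hle : dist γ (Ψ γ)^2 < (ε/2)^2 := lt_of_le_of_lt (h3 γ) hφr
      exact lt_of_pow_lt_pow_left₀ 2 (le_of_lt (half_pos hε)) hle
    have htri : Metric.infDist (Ψ γ) G ≤ Metric.infDist γ G + dist (Ψ γ) γ :=
      Metric.infDist_le_infDist_add_dist
    rw [dist_comm] at htri
    linarith
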